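/- Let X₁,…,Xₘ be i.i.d. random variables taking value +1 with probability p(1-ε), value -1 with probability pε, and 0 with probability 1-p, where ε ∈ (0,1/2] is a fixed constant, m = n + o(n), and p = a·log n/n with a > 0. If kₙ ∈ [m] with kₙ = (1+o(1))·log n/log log n, then P(∑ᵢ₌₁ᵐ Xᵢ ≤ kₙ) ≤ n^{-a(√(1-ε) - √ε)² + o(1)} as n → ∞. -/

import Mathlib

open Filter Topology

/-- `P(∑ᵢ₌₁ᵐ Xᵢ ≤ k)` where `X₁,…,Xₘ` are i.i.d. with `P(X=1)=p(1-ε)`,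
`P(X=-1)=pε`, `P(X=0)=1-p`: the sum over the numbers `s` of `+1`s and `t` of `-1`s. -/
noncomputable def signedSumLE (p ε : ℝ) (m : ℕ) (k : ℤ) : ℝ :=
  ∑ s ∈ Finset.range (m + 1), ∑ t ∈ Finset.range (m + 1),
    if s + t ≤ m ∧ (s : ℤ) - (t : ℤ) ≤ k then
      (m.choose s : ℝ) * ((m - s).choose t : ℝ) *
        (p * (1 - ε)) ^ s * (p * ε) ^ t * (1 - p) ^ (m - s - t)
    else 0

/-- Upper tail bound for the censored block model: with `ε ∈ (0,1/2]`, `m = n + o(n)`,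
`p = a log n/n`, and `kₙ = (1+o(1)) log n/log log n`, `kₙ ∈ [m]`, one has
`P(∑ Xᵢ ≤ kₙ) ≤ n^{-a(√(1-ε)-√ε)² + o(1)}`. -/
-- multinomial identity
lemma multinomial_id (x y z : ℝ) (m : ℕ) :
    ∑ s ∈ Finset.range (m + 1), ∑ t ∈ Finset.range (m + 1),
      (if s + t ≤ m then (m.choose s : ℝ) * ((m - s).choose t : ℝ) * x ^ s * y ^ t * z ^ (m - s - t) else 0)
    = (x + y + z) ^ m := by
  rw [add_assoc, add_pow]
  refine Finset.sum_congr rfl fun s hs => ?_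
  have hsm : s ≤ m := Nat.lt_succ_iff.mp (Finset.mem_range.mp hs)
  rw [add_pow, Finset.mul_sum, Finset.sum_mul]
  rw [← Finset.sum_filter]
  have hfil : (Finset.range (m + 1)).filter (fun t => s + t ≤ m) = Finset.range (m - s + 1) := by
    ext t; simp only [Finset.mem_filter, Finset.mem_range]; omega
  rw [hfil]
  refine Finset.sum_congr rfl fun t ht => ?_
  ring

lemma chernoff_bound (p ε lam : ℝ) (hp : 0 ≤ p) (hp1 : p ≤ 1) (hε : 0 ≤ ε)
    (hε1 : ε ≤ 1) (hlam : 0 ≤ lam) (m : ℕ) (k : ℤ) :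
    signedSumLE p ε m k ≤
      Real.exp (lam * k) *
        (p * (1 - ε) * Real.exp (-lam) + p * ε * Real.exp lam + (1 - p)) ^ m := by
  have key : signedSumLE p ε m k ≤
      ∑ s ∈ Finset.range (m + 1), ∑ t ∈ Finset.range (m + 1),
        Real.exp (lam * k) * (if s + t ≤ m then
          (m.choose s : ℝ) * ((m - s).choose t : ℝ) *
            (p * (1 - ε) * Real.exp (-lam)) ^ s * (p * ε * Real.exp lam) ^ t *
            (1 - p) ^ (m - s - t) else 0) := by
    unfold signedSumLE
    refine Finset.sum_le_sum fun s _ => Finset.sum_le_sum fun t _ => ?_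
    split_ifs with h1 h2 h2
    · -- both conditions hold
      have hkst : (0:ℝ) ≤ lam * ((k:ℝ) - s + t) := by
        apply mul_nonneg hlam
        have := h1.2
        have : ((s:ℝ) - t : ℝ) ≤ (k:ℝ) := by exact_mod_cast this
        linarith
      have hrw : Real.exp (lam * k) *
          ((m.choose s : ℝ) * ((m - s).choose t : ℝ) *
            (p * (1 - ε) * Real.exp (-lam)) ^ s * (p * ε * Real.exp lam) ^ t *
            (1 - p) ^ (m - s - t))
          = ((m.choose s : ℝ) * ((m - s).choose t : ℝ) *
            (p * (1 - ε)) ^ s * (p * ε) ^ t * (1 - p) ^ (m - s - t)) *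
            Real.exp (lam * ((k:ℝ) - s + t)) := by
        rw [mul_pow (p * (1 - ε)), mul_pow (p * ε), ← Real.exp_nat_mul, ← Real.exp_nat_mul]
        have e1 : Real.exp (lam * ((k:ℝ) - s + t)) =
            Real.exp (lam * k) * Real.exp ((s:ℝ) * -lam) * Real.exp ((t:ℝ) * lam) := by
          rw [← Real.exp_add, ← Real.exp_add]; congr 1; ring
        rw [e1]; ring
      rw [hrw]
      refine le_mul_of_one_le_right ?_ (Real.one_le_exp hkst)
      have h1p : 0 ≤ 1 - p := by linarith
      have h1e : 0 ≤ 1 - ε := by linarith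
      positivity
    · exact absurd h1.1 h2
    · have h1p : 0 ≤ 1 - p := by linarith
      have h1e : 0 ≤ 1 - ε := by linarith
      positivity
    · simp
  refine key.trans ?_
  rw [show (∑ s ∈ Finset.range (m + 1), ∑ t ∈ Finset.range (m + 1),
        Real.exp (lam * k) * (if s + t ≤ m then
          (m.choose s : ℝ) * ((m - s).choose t : ℝ) *
            (p * (1 - ε) * Real.exp (-lam)) ^ s * (p * ε * Real.exp lam) ^ t *
            (1 - p) ^ (m - s - t) else 0)) =
      Real.exp (lam * k) * ∑ s ∈ Finset.range (m + 1), ∑ t ∈ Finset.range (m + 1),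
        (if s + t ≤ m then
          (m.choose s : ℝ) * ((m - s).choose t : ℝ) *
            (p * (1 - ε) * Real.exp (-lam)) ^ s * (p * ε * Real.exp lam) ^ t *
            (1 - p) ^ (m - s - t) else 0) from by rw [Finset.mul_sum]; exact Finset.sum_congr rfl fun s _ => by rw [Finset.mul_sum]]
  rw [multinomial_id]


theorem censored_sum_lower_tail (a ε : ℝ) (ha : 0 < a) (hε : 0 < ε) (hε2 : ε ≤ 1 / 2)
    (m k : ℕ → ℕ)
    (hm : Filter.Tendsto (fun n => (m n : ℝ) / n) Filter.atTop (𝓝 1))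
    (hk : Filter.Tendsto
      (fun n => (k n : ℝ) * Real.log (Real.log n) / Real.log n) Filter.atTop (𝓝 1))
    (hkm : ∀ n, 1 ≤ k n ∧ k n ≤ m n) :
    ∃ e : ℕ → ℝ, Filter.Tendsto e Filter.atTop (𝓝 0) ∧
      ∀ᶠ n : ℕ in Filter.atTop,
        signedSumLE (a * Real.log n / n) ε (m n) (k n)
          ≤ (n : ℝ) ^ (-(a * (Real.sqrt (1 - ε) - Real.sqrt ε) ^ 2) + e n) := by
  have hε1 : ε < 1 := by linarith
  set A := Real.sqrt (1 - ε) with hA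
  set B := Real.sqrt ε with hB
  have hA2 : A ^ 2 = 1 - ε := Real.sq_sqrt (by linarith)
  have hB2 : B ^ 2 = ε := Real.sq_sqrt hε.le
  have hApos : 0 < A := Real.sqrt_pos.mpr (by linarith)
  have hBpos : 0 < B := Real.sqrt_pos.mpr hε
  have hBA : B ≤ A := Real.sqrt_le_sqrt (by linarith)
  set c := (A - B) ^ 2 with hc
  have hc0 : 0 ≤ c := sq_nonneg _
  have hc1 : c ≤ 1 := by nlinarith
  set lam := Real.log (A / B) with hlam
  have hlam0 : 0 ≤ lam := Real.log_nonneg ((one_le_div hBpos).mpr hBA)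
  have hexp : Real.exp lam = A / B := Real.exp_log (by positivity)
  have hexpneg : Real.exp (-lam) = B / A := by
    rw [Real.exp_neg, hexp, inv_div]
  set e : ℕ → ℝ := fun n => a * c + lam * ((k n : ℝ) / Real.log n) - a * c * ((m n : ℝ) / n)
    with he
  refine ⟨e, ?_, ?_⟩
  · have hll : Tendsto (fun n : ℕ => Real.log (Real.log n)) atTop atTop :=
      Real.tendsto_log_atTop.comp (Real.tendsto_log_atTop.comp tendsto_natCast_atTop_atTop)
    have hT1 : Tendsto (fun n : ℕ => (k n : ℝ) / Real.log n) atTop (𝓝 0) := by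
      have hinv : Tendsto (fun n : ℕ => (Real.log (Real.log n))⁻¹) atTop (𝓝 0) :=
        hll.inv_tendsto_atTop
      have hmul := hk.mul hinv
      rw [mul_zero] at hmul
      refine Tendsto.congr' ?_ hmul
      filter_upwards [hll.eventually_gt_atTop 0] with n hn
      rw [show (k n : ℝ) * Real.log (Real.log n) / Real.log n * (Real.log (Real.log n))⁻¹
          = (k n : ℝ) * (Real.log (Real.log n) * (Real.log (Real.log n))⁻¹) / Real.log n from by
            ring,
        mul_inv_cancel₀ hn.ne', mul_one]
    have : Tendsto e atTop (𝓝 (a * c + lam * 0 - a * c * 1)) :=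
      (tendsto_const_nhds.add (hT1.const_mul lam)).sub (hm.const_mul (a * c))
    simpa using this
  · have hplim : Tendsto (fun n : ℕ => a * Real.log n / n) atTop (𝓝 0) := by
      have h0 : Tendsto (fun x : ℝ => Real.log x / x) atTop (𝓝 0) :=
        Real.isLittleO_log_id_atTop.tendsto_div_nhds_zero
      have h1 : Tendsto (fun n : ℕ => Real.log n / n) atTop (𝓝 0) :=
        h0.comp tendsto_natCast_atTop_atTop
      have := h1.const_mul a
      rw [mul_zero] at this
      refine this.congr fun n => by ring
    have hp1ev : ∀ᶠ n : ℕ in atTop, a * Real.log n / n ≤ 1 := by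
      filter_upwards [hplim.eventually (eventually_le_nhds (by norm_num : (0:ℝ) < 1))] with n hn
      exact hn
    filter_upwards [hp1ev, eventually_ge_atTop 2] with n hp1 hn2
    set p := a * Real.log n / n with hp
    have hn1 : (1:ℝ) < n := by exact_mod_cast Nat.lt_of_lt_of_le one_lt_two hn2
    have hlogpos : 0 < Real.log n := Real.log_pos hn1
    have hnpos : (0:ℝ) < n := by linarith
    have hp0 : 0 ≤ p := by positivity
    have hMGF : p * (1 - ε) * Real.exp (-lam) + p * ε * Real.exp lam + (1 - p) = 1 - p * c := by
      have h1 : (1 - ε) * (B / A) = A * B := by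
        rw [← hA2]; field_simp
      have h2 : ε * (A / B) = A * B := by
        rw [← hB2]; field_simp
      have h3 : c = 1 - 2 * (A * B) := by rw [hc]; nlinarith [hA2, hB2]
      rw [hexp, hexpneg, h3,
        show p * (1 - ε) * (B / A) = p * ((1 - ε) * (B / A)) from by ring, h1,
        show p * ε * (A / B) = p * (ε * (A / B)) from by ring, h2]
      ring
    have hpc1 : 0 ≤ 1 - p * c := by nlinarith
    calc signedSumLE p ε (m n) (k n)
        ≤ Real.exp (lam * ((k n : ℤ) : ℝ)) *
            (p * (1 - ε) * Real.exp (-lam) + p * ε * Real.exp lam + (1 - p)) ^ m n :=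
          chernoff_bound p ε lam hp0 hp1 hε.le hε1.le hlam0 (m n) (k n)
      _ = Real.exp (lam * (k n : ℝ)) * (1 - p * c) ^ m n := by
          rw [hMGF]; norm_num
      _ ≤ Real.exp (lam * (k n : ℝ)) * (Real.exp (-(p * c))) ^ m n := by
          apply mul_le_mul_of_nonneg_left _ (Real.exp_nonneg _)
          exact pow_le_pow_left₀ hpc1 (by linarith [Real.add_one_le_exp (-(p * c))]) (m n)
      _ = Real.exp (lam * (k n : ℝ) - p * c * (m n : ℝ)) := by
          rw [← Real.exp_nat_mul, ← Real.exp_add]; congr 1; ring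
      _ = (n : ℝ) ^ (-(a * (A - B) ^ 2) + e n) := by
          rw [Real.rpow_def_of_pos hnpos]
          congr 1
          rw [he, hp]
          field_simp
          ring
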